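/- There is a bijection between (equivalence classes of) Krull valuations v on K with residue field L (via a fixed section L ⊆ O_v) and specialisations π : P(K) → P(L): the map sending v to the coordinatewise residue specialisation π_v, and the map sending π to the valuation with valuation ring O_K = {x : π₁([x:1]) ≠ [1:0]}, are mutually inverse. -/

import Mathlib

/-- Projective `n`-space over `K`. -/
abbrev Pn (K : Type*) [Field K] (n : ℕ) := Projectivization K (Fin (n + 1) → K)

/-- A point of `P^n(K)` lies in `P^n(L)`. -/
def InLn {K : Type*} [Field K] (L : Subfield K) {n : ℕ} (p : Pn K n) : Prop :=
  ∃ (x : Fin (n + 1) → K) (hx : x ≠ 0), (∀ i, x i ∈ L) ∧ p = Projectivization.mk K x hx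

/-- A closed subvariety of `(P^n)^m` defined over `L`: a family of multi-homogeneous
polynomials with coefficients in `L`. -/
def DefinedOverN {K : Type*} [Field K] (L : Subfield K) {n m : ℕ}
    (S : Set (MvPolynomial (Fin m × Fin (n + 1)) K)) : Prop :=
  ∀ p ∈ S, (∀ mon, MvPolynomial.coeff mon p ∈ L) ∧
    ∃ d : Fin m → ℕ,
      MvPolynomial.IsWeightedHomogeneous (fun q : Fin m × Fin (n + 1) => Pi.single q.1 1) p d

/-- A tuple of points of `P^n(K)` lies on the subvariety cut out by `S`. -/
def VanishesN {K : Type*} [Field K] {n m : ℕ}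
    (S : Set (MvPolynomial (Fin m × Fin (n + 1)) K)) (a : Fin m → Pn K n) : Prop :=
  ∃ x : Fin m → Fin (n + 1) → K,
    (∀ k, ∃ h : x k ≠ 0, Projectivization.mk K (x k) h = a k) ∧
    ∀ p ∈ S, MvPolynomial.eval (fun q : Fin m × Fin (n + 1) => x q.1 q.2) p = 0

theorem snoc_ne_zero {K : Type*} [Field K] {n : ℕ} {x : Fin (n + 1) → K} (hx : x ≠ 0) :
    (Fin.snoc x (0 : K) : Fin (n + 2) → K) ≠ 0 :=
  fun h => hx (funext fun i => by simpa using congrFun h i.castSucc)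

/-- A specialisation `π : P(K) → P(L)`: a compatible family of maps `π_n : P^n(K) → P^n(L)`
preserving all closed subvarieties of Cartesian powers of `P^n` defined over `L` and commuting
with the standard embeddings `P^n ↪ P^{n+1}`. -/
structure Specialisation (K : Type*) [Field K] (L : Subfield K) where
  toFun : ∀ n, Pn K n → Pn K n
  mem_L : ∀ n p, InLn L (toFun n p)
  fixes : ∀ n p, InLn L p → toFun n p = p
  preserves : ∀ (n m : ℕ) (S : Set (MvPolynomial (Fin m × Fin (n + 1)) K)),
    DefinedOverN L S → ∀ a : Fin m → Pn K n, VanishesN S a → VanishesN S (toFun n ∘ a)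
  compat : ∀ (n : ℕ) (x : Fin (n + 1) → K) (hx : x ≠ 0),
    ∃ (y : Fin (n + 1) → K) (hy : y ≠ 0),
      toFun n (Projectivization.mk K x hx) = Projectivization.mk K y hy ∧
      toFun (n + 1) (Projectivization.mk K (Fin.snoc x 0) (snoc_ne_zero hx)) =
        Projectivization.mk K (Fin.snoc y 0) (snoc_ne_zero hy)

/-- A Krull valuation on `K` with residue field `L` (via a fixed section `L ⊆ O_v`), given up
to equivalence by its valuation ring `O`: a subring such that `x ∈ O` or `x⁻¹ ∈ O` for each
nonzero `x`, containing `L`, such that `L` maps isomorphically onto the residue field, i.e.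
every `k ∈ O` is congruent to a unique element of `L` modulo the maximal ideal
`M = {m ∈ O : m = 0 ∨ m⁻¹ ∉ O}`. -/
structure KrullData (K : Type*) [Field K] (L : Subfield K) where
  O : Subring K
  mem_or_inv : ∀ x : K, x ≠ 0 → x ∈ O ∨ x⁻¹ ∈ O
  L_le : (L : Set K) ⊆ (O : Set K)
  residue : ∀ k ∈ O, ∃! l : K, l ∈ L ∧ (k - l ∈ O ∧ (k - l = 0 ∨ (k - l)⁻¹ ∉ O))

/-- The point `[x : 1]` of `P¹(K)`. -/
def ptK {K : Type*} [Field K] (x : K) : Pn K 1 :=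
  Projectivization.mk K ![x, 1] (by intro h; simpa using congrFun h 1)

/-- The point `[1 : 0]` of `P¹(K)`. -/
def inftyPtK (K : Type*) [Field K] : Pn K 1 :=
  Projectivization.mk K ![1, 0] (by intro h; simpa using congrFun h 0)

namespace KS
open MvPolynomial Projectivization

variable {K : Type*} [Field K] {L : Subfield K}

/- ---------- basic P¹ lemmas (from s1, assumed ok) ---------- -/
section basic
lemma mk_congr {n : ℕ} {x y : Fin (n+1) → K} (hx : x ≠ 0) (h : x = y) :
    Projectivization.mk K x hx = Projectivization.mk K y (h ▸ hx) := by subst h; rfl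

lemma mk_smul {n : ℕ} (x : Fin (n+1) → K) (hx : x ≠ 0) {c : K} (hc : c ≠ 0) :
    Projectivization.mk K (c • x) (smul_ne_zero hc hx) = Projectivization.mk K x hx := by
  rw [Projectivization.mk_eq_mk_iff]
  exact ⟨Units.mk0 c hc, rfl⟩

lemma fin2_zero {z : Fin 2 → K} (h0 : z 0 = 0) (h1 : z 1 = 0) : z = 0 := by
  funext i; fin_cases i <;> simpa

lemma fin2_ne_zero {z : Fin 2 → K} (h0 : z 0 ≠ 0 ∨ z 1 ≠ 0) : z ≠ 0 := by
  intro h; rcases h0 with h1 | h1 <;> exact h1 (by rw [h]; rfl)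

lemma eq_ptK_iff {z : Fin 2 → K} (hz : z ≠ 0) (a : K) :
    Projectivization.mk K z hz = ptK a ↔ (z 1 ≠ 0 ∧ z 0 = a * z 1) := by
  unfold ptK
  rw [Projectivization.mk_eq_mk_iff]
  constructor
  · rintro ⟨u, hu⟩
    have h1 : z 1 = u * 1 := by rw [← hu]; simp [Units.smul_def]
    have h0 : z 0 = u * a := by rw [← hu]; simp [Units.smul_def]
    refine ⟨by simpa using h1 ▸ (by simp : (u:K) * 1 ≠ 0), ?_⟩
    rw [h0, h1]; ring
  · rintro ⟨h1, h0⟩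
    refine ⟨Units.mk0 (z 1) h1, ?_⟩
    funext i; fin_cases i <;> simp [Units.smul_def, h0, mul_comm]

lemma eq_infty_iff {z : Fin 2 → K} (hz : z ≠ 0) :
    Projectivization.mk K z hz = inftyPtK K ↔ z 1 = 0 := by
  unfold inftyPtK
  rw [Projectivization.mk_eq_mk_iff]
  constructor
  · rintro ⟨u, hu⟩
    rw [← hu]; simp [Units.smul_def]
  · intro h1
    have h0 : z 0 ≠ 0 := fun h0 => hz (fin2_zero h0 h1)
    refine ⟨Units.mk0 (z 0) h0, ?_⟩
    funext i; fin_cases i <;> simp [Units.smul_def, h1]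

lemma ptK_ne_infty (a : K) : ptK a ≠ inftyPtK K := by
  intro h
  have h' : Projectivization.mk K ![a, 1] (fun hh => by simpa using congrFun hh 1) = inftyPtK K := h
  rw [eq_infty_iff] at h'; simpa using h'

lemma ptK_inj {a b : K} (h : ptK a = ptK b) : a = b := by
  have h' : Projectivization.mk K ![a, 1] (fun hh => by simpa using congrFun hh 1) = ptK b := h
  rw [eq_ptK_iff] at h'; simpa using h'.2

lemma inLn_ptK {l : K} (hl : l ∈ L) : InLn L (ptK l) := by
  refine ⟨![l, 1], fin2_ne_zero (Or.inr (by simp)), fun i => ?_, rfl⟩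
  fin_cases i <;> simp [hl]
end basic

/- ---------- variety helpers ---------- -/

lemma iwh_sub {σ : Type*} {m : ℕ} {w : σ → Fin m → ℕ} {p q : MvPolynomial σ K} {d : Fin m → ℕ}
    (hp : MvPolynomial.IsWeightedHomogeneous w p d)
    (hq : MvPolynomial.IsWeightedHomogeneous w q d) :
    MvPolynomial.IsWeightedHomogeneous w (p - q) d := by
  rw [sub_eq_add_neg]
  exact hp.add (fun mon hm => hq (by simpa using hm))

lemma coeff_int_mem {σ : Type*} (pZ : MvPolynomial σ ℤ) (mon : σ →₀ ℕ) :
    MvPolynomial.coeff mon (MvPolynomial.map (Int.castRingHom K) pZ) ∈ L := by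
  rw [MvPolynomial.coeff_map]
  exact intCast_mem L _

lemma preserve_one (π : Specialisation K L) {n m : ℕ} (P : MvPolynomial (Fin m × Fin (n+1)) K)
    (hL : ∀ mon, MvPolynomial.coeff mon P ∈ L) (d : Fin m → ℕ)
    (hd : MvPolynomial.IsWeightedHomogeneous (fun q : Fin m × Fin (n+1) => Pi.single q.1 1) P d)
    (x : Fin m → Fin (n+1) → K) (hx : ∀ k, x k ≠ 0)
    (hev : MvPolynomial.eval (fun q : Fin m × Fin (n+1) => x q.1 q.2) P = 0) :
    ∃ z : Fin m → Fin (n+1) → K, (∀ k, ∃ hk : z k ≠ 0,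
      Projectivization.mk K (z k) hk = π.toFun n (Projectivization.mk K (x k) (hx k))) ∧
      MvPolynomial.eval (fun q : Fin m × Fin (n+1) => z q.1 q.2) P = 0 := by
  obtain ⟨z, hz1, hz2⟩ := π.preserves n m {P}
    (fun p hp => by rw [Set.mem_singleton_iff] at hp; subst hp; exact ⟨hL, d, hd⟩)
    (fun k => Projectivization.mk K (x k) (hx k))
    ⟨x, fun k => ⟨hx k, rfl⟩,
      fun p hp => by rw [Set.mem_singleton_iff] at hp; subst hp; exact hev⟩
  exact ⟨z, hz1, hz2 P (Set.mem_singleton _)⟩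

/- ---------- transport of field operations ---------- -/

lemma spec_cases (π : Specialisation K L) (p : Pn K 1) :
    π.toFun 1 p = inftyPtK K ∨ ∃ l, l ∈ L ∧ π.toFun 1 p = ptK l := by
  obtain ⟨y, hy, hyL, hmk⟩ := π.mem_L 1 p
  by_cases h1 : y 1 = 0
  · left; rw [hmk, eq_infty_iff]; exact h1
  · right
    refine ⟨y 0 * (y 1)⁻¹, mul_mem (hyL 0) (inv_mem (hyL 1)), ?_⟩
    rw [hmk, eq_ptK_iff]
    exact ⟨h1, by field_simp⟩

lemma spec_add (π : Specialisation K L) {s t α β : K}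
    (hs : π.toFun 1 (ptK s) = ptK α) (ht : π.toFun 1 (ptK t) = ptK β) :
    π.toFun 1 (ptK (s + t)) = ptK (α + β) := by
  classical
  set P : MvPolynomial (Fin 3 × Fin 2) K :=
    X (0,0) * X (1,1) * X (2,1) + X (0,1) * X (1,0) * X (2,1) - X (0,1) * X (1,1) * X (2,0)
    with hPdef
  have hmap : P = MvPolynomial.map (Int.castRingHom K)
      (X (0,0) * X (1,1) * X (2,1) + X (0,1) * X (1,0) * X (2,1)
        - X (0,1) * X (1,1) * X (2,0) : MvPolynomial (Fin 3 × Fin 2) ℤ) := by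
    simp [hPdef, MvPolynomial.map_X]
  have hL : ∀ mon, MvPolynomial.coeff mon P ∈ L := fun mon => by
    rw [hmap]; exact coeff_int_mem _ _
  have hd : MvPolynomial.IsWeightedHomogeneous
      (fun q : Fin 3 × Fin 2 => Pi.single q.1 1) P
      ((Pi.single 0 1 + Pi.single 1 1 + Pi.single 2 1 : Fin 3 → ℕ)) := by
    refine iwh_sub (MvPolynomial.IsWeightedHomogeneous.add ?_ ?_) ?_ <;>
      exact ((MvPolynomial.isWeightedHomogeneous_X _ _ _).mul
        (MvPolynomial.isWeightedHomogeneous_X _ _ _)).mul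
        (MvPolynomial.isWeightedHomogeneous_X _ _ _)
  set x : Fin 3 → Fin 2 → K := ![![s, 1], ![t, 1], ![s + t, 1]] with hxdef
  have hx : ∀ k, x k ≠ 0 := by
    intro k; fin_cases k <;> exact fin2_ne_zero (Or.inr (by simp [hxdef, Matrix.vecHead, Matrix.vecTail]))
  have hev : MvPolynomial.eval (fun q : Fin 3 × Fin 2 => x q.1 q.2) P = 0 := by
    simp [hPdef, hxdef, Matrix.vecHead, Matrix.vecTail]
  obtain ⟨z, hz1, hz2⟩ := preserve_one π P hL _ hd x hx hev
  obtain ⟨h0, hm0⟩ := hz1 0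
  obtain ⟨h1, hm1⟩ := hz1 1
  obtain ⟨h2, hm2⟩ := hz1 2
  have e0 : Projectivization.mk K (z 0) h0 = ptK α := by
    rw [hm0]; exact (congrArg (π.toFun 1) (rfl : Projectivization.mk K (x 0) (hx 0) = ptK s)).trans hs
  have e1 : Projectivization.mk K (z 1) h1 = ptK β := by
    rw [hm1]; exact (congrArg (π.toFun 1) (rfl : Projectivization.mk K (x 1) (hx 1) = ptK t)).trans ht
  rw [eq_ptK_iff] at e0 e1
  have hev2 : z 0 0 * z 1 1 * z 2 1 + z 0 1 * z 1 0 * z 2 1 - z 0 1 * z 1 1 * z 2 0 = 0 := by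
    rw [hPdef] at hz2
    simpa only [map_add, map_sub, map_mul, MvPolynomial.eval_X] using hz2
  rw [e0.2, e1.2] at hev2
  have key : z 2 0 = (α + β) * z 2 1 := by
    have h3 : z 0 1 * (z 1 1 * ((α + β) * z 2 1 - z 2 0)) = 0 := by linear_combination hev2
    have h4 : (α + β) * z 2 1 - z 2 0 = 0 := by
      rcases mul_eq_zero.1 h3 with h | h
      · exact absurd h e0.1
      · rcases mul_eq_zero.1 h with h' | h'
        · exact absurd h' e1.1
        · exact h'
    linear_combination -h4
  have h21 : z 2 1 ≠ 0 := by
    intro hz21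
    exact h2 (fin2_zero (by rw [key, hz21, mul_zero]) hz21)
  have : Projectivization.mk K (z 2) h2 = ptK (α + β) := by
    rw [eq_ptK_iff]; exact ⟨h21, key⟩
  rw [← this, hm2]
  exact congrArg (π.toFun 1) (rfl : Projectivization.mk K (x 2) (hx 2) = ptK (s + t)).symm


lemma spec_mul (π : Specialisation K L) {s t α β : K}
    (hs : π.toFun 1 (ptK s) = ptK α) (ht : π.toFun 1 (ptK t) = ptK β) :
    π.toFun 1 (ptK (s * t)) = ptK (α * β) := by
  classical
  set P : MvPolynomial (Fin 3 × Fin 2) K :=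
    X (0,0) * X (1,0) * X (2,1) - X (0,1) * X (1,1) * X (2,0) with hPdef
  have hmap : P = MvPolynomial.map (Int.castRingHom K)
      (X (0,0) * X (1,0) * X (2,1) - X (0,1) * X (1,1) * X (2,0) :
        MvPolynomial (Fin 3 × Fin 2) ℤ) := by
    simp [hPdef, MvPolynomial.map_X]
  have hL : ∀ mon, MvPolynomial.coeff mon P ∈ L := fun mon => by
    rw [hmap]; exact coeff_int_mem _ _
  have hd : MvPolynomial.IsWeightedHomogeneous
      (fun q : Fin 3 × Fin 2 => Pi.single q.1 1) P
      ((Pi.single 0 1 + Pi.single 1 1 + Pi.single 2 1 : Fin 3 → ℕ)) := by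
    refine iwh_sub ?_ ?_ <;>
      exact ((MvPolynomial.isWeightedHomogeneous_X _ _ _).mul
        (MvPolynomial.isWeightedHomogeneous_X _ _ _)).mul
        (MvPolynomial.isWeightedHomogeneous_X _ _ _)
  set x : Fin 3 → Fin 2 → K := ![![s, 1], ![t, 1], ![s * t, 1]] with hxdef
  have hx : ∀ k, x k ≠ 0 := by
    intro k; fin_cases k <;>
      exact fin2_ne_zero (Or.inr (by simp [hxdef, Matrix.vecHead, Matrix.vecTail]))
  have hev : MvPolynomial.eval (fun q : Fin 3 × Fin 2 => x q.1 q.2) P = 0 := by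
    simp [hPdef, hxdef, Matrix.vecHead, Matrix.vecTail]
  obtain ⟨z, hz1, hz2⟩ := preserve_one π P hL _ hd x hx hev
  obtain ⟨h0, hm0⟩ := hz1 0
  obtain ⟨h1, hm1⟩ := hz1 1
  obtain ⟨h2, hm2⟩ := hz1 2
  have e0 : Projectivization.mk K (z 0) h0 = ptK α := by
    rw [hm0]
    exact (congrArg (π.toFun 1) (rfl : Projectivization.mk K (x 0) (hx 0) = ptK s)).trans hs
  have e1 : Projectivization.mk K (z 1) h1 = ptK β := by
    rw [hm1]
    exact (congrArg (π.toFun 1) (rfl : Projectivization.mk K (x 1) (hx 1) = ptK t)).trans ht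
  rw [eq_ptK_iff] at e0 e1
  have hev2 : z 0 0 * z 1 0 * z 2 1 - z 0 1 * z 1 1 * z 2 0 = 0 := by
    rw [hPdef] at hz2
    simpa only [map_add, map_sub, map_mul, MvPolynomial.eval_X] using hz2
  rw [e0.2, e1.2] at hev2
  have key : z 2 0 = (α * β) * z 2 1 := by
    have h3 : z 0 1 * (z 1 1 * ((α * β) * z 2 1 - z 2 0)) = 0 := by linear_combination hev2
    have h4 : (α * β) * z 2 1 - z 2 0 = 0 := by
      rcases mul_eq_zero.1 h3 with h | h
      · exact absurd h e0.1
      · rcases mul_eq_zero.1 h with h' | h'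
        · exact absurd h' e1.1
        · exact h'
    linear_combination -h4
  have h21 : z 2 1 ≠ 0 := by
    intro hz21
    exact h2 (fin2_zero (by rw [key, hz21, mul_zero]) hz21)
  have hfin : Projectivization.mk K (z 2) h2 = ptK (α * β) := by
    rw [eq_ptK_iff]; exact ⟨h21, key⟩
  rw [← hfin, hm2]
  exact congrArg (π.toFun 1) (rfl : Projectivization.mk K (x 2) (hx 2) = ptK (s * t)).symm

lemma spec_inv_aux (π : Specialisation K L) {s : K} (hs0 : s ≠ 0) :
    ∃ (z : Fin 2 → Fin 2 → K) (h0 : z 0 ≠ 0) (h1 : z 1 ≠ 0),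
      Projectivization.mk K (z 0) h0 = π.toFun 1 (ptK s) ∧
      Projectivization.mk K (z 1) h1 = π.toFun 1 (ptK s⁻¹) ∧
      z 0 0 * z 1 0 - z 0 1 * z 1 1 = 0 := by
  classical
  set P : MvPolynomial (Fin 2 × Fin 2) K :=
    X (0,0) * X (1,0) - X (0,1) * X (1,1) with hPdef
  have hmap : P = MvPolynomial.map (Int.castRingHom K)
      (X (0,0) * X (1,0) - X (0,1) * X (1,1) : MvPolynomial (Fin 2 × Fin 2) ℤ) := by
    simp [hPdef, MvPolynomial.map_X]
  have hL : ∀ mon, MvPolynomial.coeff mon P ∈ L := fun mon => by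
    rw [hmap]; exact coeff_int_mem _ _
  have hd : MvPolynomial.IsWeightedHomogeneous
      (fun q : Fin 2 × Fin 2 => Pi.single q.1 1) P
      ((Pi.single 0 1 + Pi.single 1 1 : Fin 2 → ℕ)) := by
    refine iwh_sub ?_ ?_ <;>
      exact (MvPolynomial.isWeightedHomogeneous_X _ _ _).mul
        (MvPolynomial.isWeightedHomogeneous_X _ _ _)
  set x : Fin 2 → Fin 2 → K := ![![s, 1], ![s⁻¹, 1]] with hxdef
  have hx : ∀ k, x k ≠ 0 := by
    intro k; fin_cases k <;>
      exact fin2_ne_zero (Or.inr (by simp [hxdef, Matrix.vecHead, Matrix.vecTail]))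
  have hev : MvPolynomial.eval (fun q : Fin 2 × Fin 2 => x q.1 q.2) P = 0 := by
    simp [hPdef, hxdef, Matrix.vecHead, Matrix.vecTail]
    rw [mul_inv_cancel₀ hs0]
    ring
  obtain ⟨z, hz1, hz2⟩ := preserve_one π P hL _ hd x hx hev
  obtain ⟨h0, hm0⟩ := hz1 0
  obtain ⟨h1, hm1⟩ := hz1 1
  refine ⟨z, h0, h1, ?_, ?_, ?_⟩
  · rw [hm0]
    exact congrArg (π.toFun 1) (rfl : Projectivization.mk K (x 0) (hx 0) = ptK s)
  · rw [hm1]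
    exact congrArg (π.toFun 1) (rfl : Projectivization.mk K (x 1) (hx 1) = ptK s⁻¹)
  · rw [hPdef] at hz2
    simpa only [map_add, map_sub, map_mul, MvPolynomial.eval_X] using hz2

lemma spec_inv_infty (π : Specialisation K L) {s : K} (hs0 : s ≠ 0)
    (h : π.toFun 1 (ptK s) = inftyPtK K) : π.toFun 1 (ptK s⁻¹) = ptK 0 := by
  obtain ⟨z, h0, h1, e0, e1, hev⟩ := spec_inv_aux π hs0
  rw [h] at e0
  rw [eq_infty_iff] at e0
  have h00 : z 0 0 ≠ 0 := fun hc => h0 (fin2_zero hc e0)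
  rw [e0] at hev
  have h10 : z 1 0 = 0 := by
    have := mul_eq_zero.1 (by linear_combination hev : z 0 0 * z 1 0 = 0)
    rcases this with h | h
    · exact absurd h h00
    · exact h
  have h11 : z 1 1 ≠ 0 := fun hc => h1 (fin2_zero h10 hc)
  rw [← e1, eq_ptK_iff]
  exact ⟨h11, by rw [h10, zero_mul]⟩

lemma spec_ptK0_inv (π : Specialisation K L) {s : K} (hs0 : s ≠ 0)
    (h : π.toFun 1 (ptK s) = ptK 0) : π.toFun 1 (ptK s⁻¹) = inftyPtK K := by
  obtain ⟨z, h0, h1, e0, e1, hev⟩ := spec_inv_aux π hs0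
  rw [h] at e0
  rw [eq_ptK_iff] at e0
  have h00 : z 0 0 = 0 := by rw [e0.2, zero_mul]
  have h11 : z 1 1 = 0 := by
    have h3 : z 0 1 * z 1 1 = 0 := by rw [h00] at hev; linear_combination -hev
    rcases mul_eq_zero.1 h3 with hh | hh
    · exact absurd hh e0.1
    · exact hh
  rw [← e1, eq_infty_iff]
  exact h11

lemma spec_fix_L (π : Specialisation K L) {l : K} (hl : l ∈ L) :
    π.toFun 1 (ptK l) = ptK l :=
  π.fixes 1 _ (inLn_ptK hl)

lemma spec_neg (π : Specialisation K L) {s α : K} (hs : π.toFun 1 (ptK s) = ptK α) :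
    π.toFun 1 (ptK (-s)) = ptK (-α) := by
  have h1 : π.toFun 1 (ptK (-1 : K)) = ptK (-1 : K) := spec_fix_L π (neg_mem (one_mem L))
  have := spec_mul π hs h1
  rw [mul_neg_one, mul_neg_one] at this
  exact this

/- ---------- the valuation ring of a specialisation ---------- -/

def toO (π : Specialisation K L) : Subring K where
  carrier := {x : K | π.toFun 1 (ptK x) ≠ inftyPtK K}
  one_mem' := by
    simp only [Set.mem_setOf_eq]
    rw [spec_fix_L π (one_mem L)]; exact ptK_ne_infty 1
  zero_mem' := by
    simp only [Set.mem_setOf_eq]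
    rw [spec_fix_L π (zero_mem L)]; exact ptK_ne_infty 0
  add_mem' := by
    intro a b ha hb
    rcases spec_cases π (ptK a) with h | ⟨α, hα, h⟩
    · exact absurd h ha
    rcases spec_cases π (ptK b) with h' | ⟨β, hβ, h'⟩
    · exact absurd h' hb
    show π.toFun 1 (ptK (a + b)) ≠ inftyPtK K
    rw [spec_add π h h']; exact ptK_ne_infty _
  mul_mem' := by
    intro a b ha hb
    rcases spec_cases π (ptK a) with h | ⟨α, hα, h⟩
    · exact absurd h ha
    rcases spec_cases π (ptK b) with h' | ⟨β, hβ, h'⟩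
    · exact absurd h' hb
    show π.toFun 1 (ptK (a * b)) ≠ inftyPtK K
    rw [spec_mul π h h']; exact ptK_ne_infty _
  neg_mem' := by
    intro a ha
    rcases spec_cases π (ptK a) with h | ⟨α, hα, h⟩
    · exact absurd h ha
    show π.toFun 1 (ptK (-a)) ≠ inftyPtK K
    rw [spec_neg π h]; exact ptK_ne_infty _

lemma mem_toO_iff (π : Specialisation K L) (x : K) :
    x ∈ toO π ↔ π.toFun 1 (ptK x) ≠ inftyPtK K := Iff.rfl

lemma toO_val (π : Specialisation K L) {x : K} (hx : x ∈ toO π) :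
    ∃ l, l ∈ L ∧ π.toFun 1 (ptK x) = ptK l := by
  rcases spec_cases π (ptK x) with h | h
  · exact absurd h hx
  · exact h

lemma spec_M_pt (π : Specialisation K L) {m : K} (hm : m ∈ toO π)
    (hM : m = 0 ∨ m⁻¹ ∉ toO π) : π.toFun 1 (ptK m) = ptK 0 := by
  rcases hM with rfl | hM
  · exact spec_fix_L π (zero_mem L)
  · have hm0 : m ≠ 0 := by
      intro h; subst h; exact hM (by rw [inv_zero]; exact zero_mem (toO π))
    have h1 : π.toFun 1 (ptK m⁻¹) = inftyPtK K := not_not.1 hM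
    have := spec_inv_infty π (inv_ne_zero hm0) h1
    rwa [inv_inv] at this

def toKrull (π : Specialisation K L) : KrullData K L where
  O := toO π
  mem_or_inv := fun x hx => by
    by_cases h : π.toFun 1 (ptK x) = inftyPtK K
    · right
      show π.toFun 1 (ptK x⁻¹) ≠ inftyPtK K
      rw [spec_inv_infty π hx h]; exact ptK_ne_infty 0
    · left; exact h
  L_le := fun l hl => by
    show π.toFun 1 (ptK l) ≠ inftyPtK K
    rw [spec_fix_L π hl]; exact ptK_ne_infty l
  residue := fun k hk => by
    obtain ⟨α, hαL, hα⟩ := toO_val π hk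
    have hsub : π.toFun 1 (ptK (k - α)) = ptK 0 := by
      have hneg : π.toFun 1 (ptK (-α)) = ptK (-α) := spec_fix_L π (neg_mem hαL)
      have := spec_add π hα hneg
      rw [add_neg_cancel] at this
      rwa [sub_eq_add_neg]
    refine ⟨α, ⟨hαL, ?_, ?_⟩, ?_⟩
    · show π.toFun 1 (ptK (k - α)) ≠ inftyPtK K
      rw [hsub]; exact ptK_ne_infty 0
    · by_cases h0 : k - α = 0
      · exact Or.inl h0
      · refine Or.inr (fun hmem => ?_)
        have := spec_ptK0_inv π h0 hsub
        exact hmem this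
    · rintro l' ⟨hl'L, hl'O, hl'M⟩
      have h1 : π.toFun 1 (ptK (k - l')) = ptK 0 := spec_M_pt π hl'O hl'M
      have h2 : π.toFun 1 (ptK (k - l')) = ptK (α - l') := by
        have hneg : π.toFun 1 (ptK (-l')) = ptK (-l') := spec_fix_L π (neg_mem hl'L)
        have := spec_add π hα hneg
        rwa [← sub_eq_add_neg, ← sub_eq_add_neg] at this
      have h3 : α - l' = 0 := ptK_inj (h2.symm.trans h1)
      have := sub_eq_zero.1 h3
      exact this.symm


/- ---------- KrullData basic theory ---------- -/

section Krull
variable (V : KrullData K L)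

def Mv (m : K) : Prop := m ∈ V.O ∧ (m = 0 ∨ m⁻¹ ∉ V.O)

lemma Mv_zero : Mv V 0 := ⟨zero_mem _, Or.inl rfl⟩

variable {V}

lemma Mv_add {a b : K} (ha : Mv V a) (hb : Mv V b) : Mv V (a + b) := by
  refine ⟨add_mem ha.1 hb.1, ?_⟩
  by_cases hab : a + b = 0
  · exact Or.inl hab
  refine Or.inr (fun hinv => ?_)
  by_cases ha0 : a = 0
  · subst ha0
    rcases hb.2 with h | h
    · exact hab (by rw [h, add_zero])
    · exact h (by rwa [zero_add] at hinv)
  by_cases hb0 : b = 0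
  · subst hb0
    rcases ha.2 with h | h
    · exact hab (by rw [h, zero_add])
    · exact h (by rwa [add_zero] at hinv)
  have hamem := ha.2.resolve_left ha0
  have hbmem := hb.2.resolve_left hb0
  rcases V.mem_or_inv (a * b⁻¹) (mul_ne_zero ha0 (inv_ne_zero hb0)) with h | h
  · refine hbmem ?_
    have : b⁻¹ = (a + b)⁻¹ * (a * b⁻¹ + 1) := by field_simp
    rw [this]
    exact mul_mem hinv (add_mem h (one_mem _))
  · rw [mul_inv, inv_inv] at h
    refine hamem ?_
    have heq : a⁻¹ = (a + b)⁻¹ * (b * a⁻¹ + 1) := by field_simp; ring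
    rw [heq]
    exact mul_mem hinv (add_mem (by rwa [mul_comm]) (one_mem _))

lemma Mv_mul {o m : K} (ho : o ∈ V.O) (hm : Mv V m) : Mv V (o * m) := by
  refine ⟨mul_mem ho hm.1, ?_⟩
  by_cases h0 : o * m = 0
  · exact Or.inl h0
  refine Or.inr (fun hinv => ?_)
  have ho0 : o ≠ 0 := fun h => h0 (by rw [h, zero_mul])
  have hm0 : m ≠ 0 := fun h => h0 (by rw [h, mul_zero])
  have hminv := hm.2.resolve_left hm0
  refine hminv ?_
  have : m⁻¹ = o * (o * m)⁻¹ := by field_simp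
  rw [this]
  exact mul_mem ho hinv

open Classical in
noncomputable def _root_.KrullData.resv (V : KrullData K L) (k : K) : K :=
  if h : k ∈ V.O then (V.residue k h).choose else 0

lemma resv_spec {k : K} (h : k ∈ V.O) :
    V.resv k ∈ L ∧ (k - V.resv k ∈ V.O ∧ (k - V.resv k = 0 ∨ (k - V.resv k)⁻¹ ∉ V.O)) := by
  rw [KrullData.resv, dif_pos h]
  exact (V.residue k h).choose_spec.1

lemma resv_mem_L {k : K} (h : k ∈ V.O) : V.resv k ∈ L := (resv_spec h).1

lemma resv_sub_Mv {k : K} (h : k ∈ V.O) : Mv V (k - V.resv k) := (resv_spec h).2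

lemma resv_unique {k l : K} (h : k ∈ V.O) (hl : l ∈ L) (hm : Mv V (k - l)) :
    V.resv k = l := by
  have := (V.residue k h).choose_spec.2 l ⟨hl, hm⟩
  rw [KrullData.resv, dif_pos h]
  exact this.symm

lemma resv_L {l : K} (hl : l ∈ L) : V.resv l = l :=
  resv_unique (V.L_le hl) hl (by rw [sub_self]; exact Mv_zero V)

lemma resv_one : V.resv 1 = 1 := resv_L (one_mem L)

lemma resv_zero : V.resv 0 = 0 := resv_L (zero_mem L)

lemma resv_Mv {m : K} (hm : Mv V m) : V.resv m = 0 :=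
  resv_unique hm.1 (zero_mem L) (by rwa [sub_zero])

lemma resv_add {a b : K} (ha : a ∈ V.O) (hb : b ∈ V.O) :
    V.resv (a + b) = V.resv a + V.resv b := by
  refine resv_unique (add_mem ha hb) (add_mem (resv_mem_L ha) (resv_mem_L hb)) ?_
  have h := Mv_add (resv_sub_Mv ha) (resv_sub_Mv hb)
  rwa [show a - V.resv a + (b - V.resv b) = a + b - (V.resv a + V.resv b) by ring] at h

lemma resv_mul {a b : K} (ha : a ∈ V.O) (hb : b ∈ V.O) :
    V.resv (a * b) = V.resv a * V.resv b := by
  refine resv_unique (mul_mem ha hb) (mul_mem (resv_mem_L ha) (resv_mem_L hb)) ?_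
  have h := Mv_add (Mv_mul ha (resv_sub_Mv hb)) (Mv_mul (V.L_le (resv_mem_L hb)) (resv_sub_Mv ha))
  rwa [show a * (b - V.resv b) + V.resv b * (a - V.resv a)
      = a * b - V.resv a * V.resv b by ring] at h

lemma resv_unit_ne {k : K} (hk : k ∈ V.O) (hk0 : k ≠ 0) (hkinv : k⁻¹ ∈ V.O) :
    V.resv k ≠ 0 := by
  intro h
  have hs := resv_sub_Mv hk
  rw [h, sub_zero] at hs
  rcases hs.2 with h' | h'
  · exact hk0 h'
  · exact h' hkinv

lemma resv_mem_O {k : K} : V.resv k ∈ V.O := by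
  by_cases h : k ∈ V.O
  · exact V.L_le (resv_mem_L h)
  · rw [KrullData.resv, dif_neg h]; exact zero_mem _


/- ---------- normalization ---------- -/

def Good (V : KrullData K L) {n : ℕ} (x : Fin n → K) (j : Fin n) : Prop :=
  x j ≠ 0 ∧ ∀ i, x i * (x j)⁻¹ ∈ V.O

lemma exists_good {n : ℕ} {x : Fin n → K} (hx : x ≠ 0) : ∃ j, Good V x j := by
  classical
  have main : ∀ s : Finset (Fin n), (∀ i ∈ s, x i ≠ 0) → s.Nonempty →
      ∃ j ∈ s, ∀ i ∈ s, x i * (x j)⁻¹ ∈ V.O := by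
    intro s
    induction s using Finset.induction_on with
    | empty => intro _ h; exact absurd h (by simp)
    | @insert a s ha ih =>
      intro hne _
      have hxa : x a ≠ 0 := hne a (Finset.mem_insert_self a s)
      by_cases hs : s.Nonempty
      · obtain ⟨j, hjs, hj⟩ := ih (fun i hi => hne i (Finset.mem_insert_of_mem hi)) hs
        have hxj : x j ≠ 0 := hne j (Finset.mem_insert_of_mem hjs)
        rcases V.mem_or_inv (x a * (x j)⁻¹) (mul_ne_zero hxa (inv_ne_zero hxj)) with h | h
        · refine ⟨j, Finset.mem_insert_of_mem hjs, fun i hi => ?_⟩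
          rcases Finset.mem_insert.1 hi with rfl | hi
          · exact h
          · exact hj i hi
        · rw [mul_inv, inv_inv] at h
          refine ⟨a, Finset.mem_insert_self a s, fun i hi => ?_⟩
          rcases Finset.mem_insert.1 hi with rfl | hi
          · rw [mul_inv_cancel₀ hxa]; exact one_mem _
          · have heq : x i * (x a)⁻¹ = (x i * (x j)⁻¹) * ((x a)⁻¹ * x j) := by
              field_simp
            rw [heq]
            exact mul_mem (hj i hi) ((mul_comm ((x a)⁻¹) (x j)) ▸ h)
      · rw [Finset.not_nonempty_iff_eq_empty] at hs
        subst hs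
        refine ⟨a, Finset.mem_insert_self a _, fun i hi => ?_⟩
        rcases Finset.mem_insert.1 hi with rfl | hi
        · rw [mul_inv_cancel₀ hxa]; exact one_mem _
        · exact absurd hi (by simp)
  obtain ⟨i0, hi0⟩ := Function.ne_iff.1 hx
  have hne0 : (Finset.univ.filter (fun i => x i ≠ 0)).Nonempty :=
    ⟨i0, Finset.mem_filter.2 ⟨Finset.mem_univ _, hi0⟩⟩
  obtain ⟨j, hjs, hj⟩ := main _ (fun i hi => (Finset.mem_filter.1 hi).2) hne0
  have hxj : x j ≠ 0 := (Finset.mem_filter.1 hjs).2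
  refine ⟨j, hxj, fun i => ?_⟩
  by_cases hxi : x i = 0
  · rw [hxi, zero_mul]; exact zero_mem _
  · exact hj i (Finset.mem_filter.2 ⟨Finset.mem_univ _, hxi⟩)

noncomputable def vec (V : KrullData K L) {n : ℕ} (x : Fin n → K) (j : Fin n) : Fin n → K :=
  fun i => V.resv (x i * (x j)⁻¹)

lemma vec_ne_zero {n : ℕ} {x : Fin n → K} {j : Fin n} (h : Good V x j) :
    vec V x j ≠ 0 := by
  intro hz
  have := congrFun hz j
  rw [vec, mul_inv_cancel₀ h.1, resv_one] at this
  exact one_ne_zero this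

lemma vec_mem_L {n : ℕ} {x : Fin n → K} {j : Fin n} (hj : Good V x j) (i : Fin n) :
    vec V x j i ∈ L := resv_mem_L (hj.2 i)

lemma mk_vec_two_good {n : ℕ} {y : Fin (n+1) → K} {j j' : Fin (n+1)}
    (h1 : Good V y j) (h2 : Good V y j') :
    Projectivization.mk K (vec V y j) (vec_ne_zero h1)
      = Projectivization.mk K (vec V y j') (vec_ne_zero h2) := by
  set u : K := y j' * (y j)⁻¹ with hu
  have hu0 : u ≠ 0 := mul_ne_zero h2.1 (inv_ne_zero h1.1)
  have huO : u ∈ V.O := h1.2 j'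
  have huinvO : u⁻¹ ∈ V.O := by
    rw [hu, mul_inv, inv_inv, mul_comm]
    exact h2.2 j
  have hr : V.resv u ≠ 0 := resv_unit_ne huO hu0 huinvO
  have hvec : vec V y j = V.resv u • vec V y j' := by
    funext i
    rw [Pi.smul_apply, smul_eq_mul, vec, vec, ← resv_mul huO (h2.2 i)]
    congr 1
    rw [hu]
    rw [show y j' * (y j)⁻¹ * (y i * (y j')⁻¹) = (y i * (y j)⁻¹) * (y j' * (y j')⁻¹) from by
      ring, mul_inv_cancel₀ h2.1, mul_one]
  rw [← mk_smul (vec V y j') (vec_ne_zero h2) hr]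
  exact mk_congr (vec_ne_zero h1) hvec

lemma good_of_smul {n : ℕ} {x y : Fin (n+1) → K} {j : Fin (n+1)} (u : Kˣ)
    (hxy : x = u • y) (hj : Good V x j) : Good V y j := by
  have hyj : y j ≠ 0 := fun h => hj.1 (by rw [hxy, Pi.smul_apply, h, smul_zero])
  have hu0 : (u : K) ≠ 0 := u.ne_zero
  refine ⟨hyj, fun i => ?_⟩
  have h2 := hj.2 i
  rw [hxy] at h2
  simp only [Pi.smul_apply, Units.smul_def, smul_eq_mul, mul_inv] at h2
  rwa [show (u : K) * y i * (((u : K))⁻¹ * (y j)⁻¹) = y i * (y j)⁻¹ by field_simp] at h2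

lemma vec_smul_eq {n : ℕ} {x y : Fin (n+1) → K} {j : Fin (n+1)} (u : Kˣ)
    (hxy : x = u • y) (hyj : y j ≠ 0) : vec V x j = vec V y j := by
  funext i
  rw [vec, vec, hxy]
  have hu0 : (u : K) ≠ 0 := u.ne_zero
  congr 1
  simp only [Pi.smul_apply, Units.smul_def, smul_eq_mul, mul_inv]
  by_cases hyj : y j = 0
  · simp [hyj]
  · field_simp

lemma mk_vec_congr {n : ℕ} {x y : Fin (n+1) → K} {j j' : Fin (n+1)}
    (hgx : Good V x j) (hgy : Good V y j') (hx : x ≠ 0) (hy : y ≠ 0)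
    (h : Projectivization.mk K x hx = Projectivization.mk K y hy) :
    Projectivization.mk K (vec V x j) (vec_ne_zero hgx)
      = Projectivization.mk K (vec V y j') (vec_ne_zero hgy) := by
  obtain ⟨u, hu⟩ := (Projectivization.mk_eq_mk_iff K x y hx hy).1 h
  have hxy : x = u • y := hu.symm
  have hgyj : Good V y j := good_of_smul u hxy hgx
  have : vec V x j = vec V y j := vec_smul_eq u hxy hgyj.1
  calc Projectivization.mk K (vec V x j) (vec_ne_zero hgx)
      = Projectivization.mk K (vec V y j) (vec_ne_zero hgyj) := mk_congr _ this
    _ = Projectivization.mk K (vec V y j') (vec_ne_zero hgy) := mk_vec_two_good hgyj hgy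


noncomputable def resHom (V : KrullData K L) : V.O →+* K where
  toFun := fun o => V.resv o
  map_one' := by simpa using resv_one (V := V)
  map_mul' := fun a b => by simpa using resv_mul a.2 b.2
  map_zero' := by simpa using resv_zero (V := V)
  map_add' := fun a b => by simpa using resv_add a.2 b.2

set_option maxHeartbeats 1000000 in
set_option synthInstance.maxHeartbeats 400000 in
lemma resv_eval {σ : Type*} (p : MvPolynomial σ K) (hc : ∀ mon, MvPolynomial.coeff mon p ∈ L)
    (v : σ → K) (hv : ∀ q, v q ∈ V.O) :
    MvPolynomial.eval (fun q => V.resv (v q)) p = V.resv (MvPolynomial.eval v p) := by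
  classical
  set incl : V.O →+* K := V.O.subtype with hincl
  set w : σ → V.O := fun q => ⟨v q, hv q⟩ with hw
  set pO : MvPolynomial σ V.O :=
    ∑ mon ∈ p.support, MvPolynomial.monomial mon (⟨MvPolynomial.coeff mon p,
      V.L_le (hc mon)⟩ : V.O) with hpO
  have hmap1 : MvPolynomial.map incl pO = p := by
    rw [hpO, map_sum]
    simp only [MvPolynomial.map_monomial]
    exact p.support_sum_monomial_coeff
  have hmap2 : MvPolynomial.map (resHom V) pO = p := by
    rw [hpO, map_sum]
    simp only [MvPolynomial.map_monomial]
    have hcongr : ∀ mon ∈ p.support,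
        MvPolynomial.monomial mon (resHom V ⟨MvPolynomial.coeff mon p, V.L_le (hc mon)⟩)
          = MvPolynomial.monomial mon (MvPolynomial.coeff mon p) := by
      intro mon _
      congr 1
      show V.resv (MvPolynomial.coeff mon p) = MvPolynomial.coeff mon p
      exact resv_L (hc mon)
    rw [Finset.sum_congr rfl hcongr]
    exact p.support_sum_monomial_coeff
  have e1 : MvPolynomial.eval v p = incl (MvPolynomial.eval w pO) := by
    conv_lhs => rw [← hmap1, MvPolynomial.eval_map]
    rw [show MvPolynomial.eval w pO = MvPolynomial.eval₂ (RingHom.id V.O) w pO from rfl]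
    rw [MvPolynomial.eval₂_comp_left incl (RingHom.id V.O) w pO]
    rw [RingHom.comp_id]
    rfl
  have e2 : MvPolynomial.eval (fun q => V.resv (v q)) p = resHom V (MvPolynomial.eval w pO) := by
    conv_lhs => rw [← hmap2, MvPolynomial.eval_map]
    rw [show MvPolynomial.eval w pO = MvPolynomial.eval₂ (RingHom.id V.O) w pO from rfl]
    rw [MvPolynomial.eval₂_comp_left (resHom V) (RingHom.id V.O) w pO]
    rw [RingHom.comp_id]
    rfl
  rw [e1, e2]
  rfl

lemma eval_weighted_scale {m' n' : ℕ} (p : MvPolynomial (Fin m' × Fin n') K) {d : Fin m' → ℕ}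
    (hp : MvPolynomial.IsWeightedHomogeneous
      (fun q : Fin m' × Fin n' => Pi.single q.1 1) p d)
    (c : Fin m' → K) (v : Fin m' × Fin n' → K) :
    MvPolynomial.eval (fun q => c q.1 * v q) p
      = (∏ k, c k ^ d k) * MvPolynomial.eval v p := by
  classical
  conv_lhs => rw [p.as_sum]
  conv_rhs => rw [p.as_sum]
  rw [map_sum, map_sum, Finset.mul_sum]
  refine Finset.sum_congr rfl fun mon hmon => ?_
  rw [MvPolynomial.eval_monomial, MvPolynomial.eval_monomial]
  have hdeg := hp (MvPolynomial.mem_support_iff.1 hmon)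
  have key : (mon.prod fun q e => (c q.1 * v q) ^ e)
      = (∏ k, c k ^ d k) * mon.prod fun q e => v q ^ e := by
    rw [Finsupp.prod, Finsupp.prod]
    rw [Finset.prod_congr rfl (fun q (_ : q ∈ mon.support) => mul_pow (c q.1) (v q) (mon q)),
      Finset.prod_mul_distrib]
    congr 1
    rw [← Finset.prod_fiberwise_of_maps_to (g := Prod.fst) (t := Finset.univ)
      (fun q _ => Finset.mem_univ q.1) (fun q => c q.1 ^ mon q)]
    refine Finset.prod_congr rfl fun k _ => ?_
    have h1 : ∀ q ∈ mon.support.filter (fun q => q.1 = k), c q.1 ^ mon q = c k ^ mon q := by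
      intro q hq; rw [(Finset.mem_filter.1 hq).2]
    rw [Finset.prod_congr rfl h1, Finset.prod_pow_eq_pow_sum]
    congr 1
    have h2 := congrFun hdeg k
    rw [Finsupp.weight_apply, Finsupp.sum, Finset.sum_apply] at h2
    rw [← h2, Finset.sum_filter]
    refine Finset.sum_congr rfl fun q _ => ?_
    rw [Pi.smul_apply, Pi.single_apply, smul_eq_mul]
    by_cases h : q.1 = k
    · simp [h]
    · simp [h, Ne.symm h]
  rw [key]; ring


noncomputable def specAt (V : KrullData K L) {n : ℕ} (p : Pn K n) : Pn K n :=
  Projectivization.mk K (vec V p.rep (Classical.choose (exists_good (V := V) p.rep_nonzero)))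
    (vec_ne_zero (Classical.choose_spec (exists_good (V := V) p.rep_nonzero)))

lemma specAt_mk {n : ℕ} (x : Fin (n+1) → K) (hx : x ≠ 0) {j : Fin (n+1)} (hj : Good V x j) :
    specAt V (Projectivization.mk K x hx)
      = Projectivization.mk K (vec V x j) (vec_ne_zero hj) :=
  mk_vec_congr (Classical.choose_spec (exists_good (V := V) (Projectivization.mk K x hx).rep_nonzero))
    hj (Projectivization.rep_nonzero _) hx (Projectivization.mk_rep _)

noncomputable def toSpec (V : KrullData K L) : Specialisation K L where
  toFun := fun _ p => specAt V p
  mem_L := fun n p =>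
    ⟨vec V p.rep (Classical.choose (exists_good (V := V) p.rep_nonzero)),
      vec_ne_zero (Classical.choose_spec (exists_good (V := V) p.rep_nonzero)),
      fun i => vec_mem_L (Classical.choose_spec (exists_good (V := V) p.rep_nonzero)) i, rfl⟩
  fixes := fun n p hp => by
    obtain ⟨y, hy, hyL, rfl⟩ := hp
    obtain ⟨i0, hi0⟩ := Function.ne_iff.1 hy
    have hgood : Good V y i0 :=
      ⟨hi0, fun i => V.L_le (mul_mem (hyL i) (inv_mem (hyL i0)))⟩
    show specAt V (Projectivization.mk K y hy) = Projectivization.mk K y hy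
    rw [specAt_mk y hy hgood]
    have hvec : vec V y i0 = (y i0)⁻¹ • y := by
      funext i
      rw [vec, resv_L (mul_mem (hyL i) (inv_mem (hyL i0))), Pi.smul_apply, smul_eq_mul, mul_comm]
    rw [mk_congr (vec_ne_zero hgood) hvec]
    exact mk_smul y hy (inv_ne_zero hi0)
  preserves := fun n m S hS a hvan => by
    obtain ⟨x, hx1, hx2⟩ := hvan
    choose hx hmk using hx1
    choose j hj using fun k => exists_good (V := V) (hx k)
    refine ⟨fun k => vec V (x k) (j k), fun k => ⟨vec_ne_zero (hj k), ?_⟩, ?_⟩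
    · show _ = specAt V (a k)
      rw [← hmk k, specAt_mk (x k) (hx k) (hj k)]
    · intro p hp
      obtain ⟨hcoeff, d, hd⟩ := hS p hp
      set cc : Fin m → K := fun k => (x k (j k))⁻¹ with hcc
      set v : Fin m × Fin (n+1) → K := fun q => x q.1 q.2 with hv
      have hO : ∀ q : Fin m × Fin (n+1), cc q.1 * v q ∈ V.O := fun q => by
        rw [hcc, hv, mul_comm]
        exact (hj q.1).2 q.2
      have h1 : MvPolynomial.eval (fun q => cc q.1 * v q) p = 0 := by
        rw [eval_weighted_scale p hd cc v, hx2 p hp, mul_zero]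
      have h2 := resv_eval (V := V) p hcoeff (fun q => cc q.1 * v q) hO
      have h3 : (fun q : Fin m × Fin (n+1) => vec V (x q.1) (j q.1) q.2)
          = fun q => V.resv (cc q.1 * v q) := by
        funext q
        rw [vec, hcc, hv, mul_comm]
      rw [h3, h2, h1, resv_zero]
  compat := fun n x hx => by
    obtain ⟨j, hj⟩ := exists_good (V := V) hx
    refine ⟨vec V x j, vec_ne_zero hj, specAt_mk x hx hj, ?_⟩
    have hgood' : Good V (Fin.snoc x (0:K)) j.castSucc := by
      refine ⟨?_, fun i => ?_⟩
      · rw [Fin.snoc_castSucc]; exact hj.1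
      · refine Fin.lastCases ?_ (fun i' => ?_) i
        · rw [Fin.snoc_last, zero_mul]; exact zero_mem _
        · rw [Fin.snoc_castSucc, Fin.snoc_castSucc]; exact hj.2 i'
    show specAt V (Projectivization.mk K (Fin.snoc x 0) (snoc_ne_zero hx)) = _
    rw [specAt_mk _ (snoc_ne_zero hx) hgood']
    have hvec : vec V (Fin.snoc x (0:K)) j.castSucc = Fin.snoc (vec V x j) (0:K) := by
      funext i
      refine Fin.lastCases ?_ (fun i' => ?_) i
      · rw [vec, Fin.snoc_last, Fin.snoc_last, zero_mul, resv_zero]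
      · rw [vec, Fin.snoc_castSucc, Fin.snoc_castSucc, Fin.snoc_castSucc, vec]
    exact mk_congr (vec_ne_zero hgood') hvec

end Krull

/- ---------- round trip lemmas ---------- -/

lemma mem_O_iff_toSpec (V : KrullData K L) (x : K) :
    x ∈ V.O ↔ specAt V (ptK x) ≠ inftyPtK K := by
  have hvne : (![x, 1] : Fin 2 → K) ≠ 0 := fin2_ne_zero (Or.inr (by simp))
  constructor
  · intro hx
    have hgood : Good V ![x, 1] 1 := by
      refine ⟨by simp, fun i => ?_⟩
      fin_cases i <;> simp
      · exact hx
    have : specAt V (ptK x) = Projectivization.mk K (vec V ![x, 1] 1) (vec_ne_zero hgood) :=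
      specAt_mk ![x, 1] hvne hgood
    rw [this, Ne, eq_infty_iff]
    show ¬ V.resv ((![x,1] : Fin 2 → K) 1 * ((![x,1] : Fin 2 → K) 1)⁻¹) = 0
    simp only [Matrix.cons_val_one, Matrix.head_cons, Matrix.cons_val_zero, one_mul, inv_one, resv_one]
    exact one_ne_zero
  · intro hne
    by_contra hx
    have hx0 : x ≠ 0 := by
      rintro rfl
      exact hx (zero_mem _)
    have hxinv : x⁻¹ ∈ V.O := (V.mem_or_inv x hx0).resolve_left hx
    have hgood : Good V ![x, 1] 0 := by
      refine ⟨by simpa using hx0, fun i => ?_⟩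
      fin_cases i <;> simp
      · rw [mul_inv_cancel₀ hx0]; exact one_mem _
      · exact hxinv
    have : specAt V (ptK x) = Projectivization.mk K (vec V ![x, 1] 0) (vec_ne_zero hgood) :=
      specAt_mk ![x, 1] hvne hgood
    rw [this, Ne, eq_infty_iff] at hne
    apply hne
    show V.resv ((![x,1] : Fin 2 → K) 1 * ((![x,1] : Fin 2 → K) 0)⁻¹) = 0
    simp only [Matrix.cons_val_one, Matrix.head_cons, Matrix.cons_val_zero, one_mul]
    exact resv_Mv ⟨hxinv, Or.inr (by rwa [inv_inv])⟩

lemma spec_resv (π : Specialisation K L) {k : K} (hk : k ∈ (toKrull π).O) :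
    π.toFun 1 (ptK k) = ptK ((toKrull π).resv k) := by
  obtain ⟨α, hαL, hα⟩ := toO_val π hk
  have hsub : π.toFun 1 (ptK (k - α)) = ptK 0 := by
    have hneg : π.toFun 1 (ptK (-α)) = ptK (-α) := spec_fix_L π (neg_mem hαL)
    have := spec_add π hα hneg
    rw [add_neg_cancel] at this
    rwa [sub_eq_add_neg]
  have hMv : Mv (toKrull π) (k - α) := by
    refine ⟨?_, ?_⟩
    · show π.toFun 1 (ptK (k - α)) ≠ inftyPtK K
      rw [hsub]; exact ptK_ne_infty 0
    · by_cases h0 : k - α = 0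
      · exact Or.inl h0
      · exact Or.inr fun hmem => hmem (spec_ptK0_inv π h0 hsub)
  rw [resv_unique hk hαL hMv]
  exact hα

/- ---------- padding P¹ into Pⁿ ---------- -/

def pad : ∀ (t : ℕ), (Fin 2 → K) → Fin (t + 2) → K
  | 0, v => v
  | (t+1), v => Fin.snoc (pad t v) 0

lemma pad_ne_zero {v : Fin 2 → K} (hv : v ≠ 0) : ∀ t, pad t v ≠ 0
  | 0 => hv
  | (t+1) => snoc_ne_zero (pad_ne_zero hv t)

lemma pad_zero_app (t : ℕ) (v : Fin 2 → K) : pad t v 0 = v 0 := by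
  induction t with
  | zero => rfl
  | succ t ih =>
    show (Fin.snoc (pad t v) 0 : Fin (t+3) → K) 0 = v 0
    rw [show (0 : Fin (t+3)) = Fin.castSucc 0 from (Fin.castSucc_zero).symm, Fin.snoc_castSucc]
    exact ih

lemma pad_one_app (t : ℕ) (v : Fin 2 → K) : pad t v 1 = v 1 := by
  induction t with
  | zero => rfl
  | succ t ih =>
    show (Fin.snoc (pad t v) 0 : Fin (t+3) → K) 1 = v 1
    rw [show (1 : Fin (t+3)) = Fin.castSucc 1 from (Fin.castSucc_one).symm, Fin.snoc_castSucc]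
    exact ih

lemma pad_smul (t : ℕ) (c : K) (v : Fin 2 → K) : pad t (c • v) = c • pad t v := by
  induction t with
  | zero => rfl
  | succ t ih =>
    show (Fin.snoc (pad t (c • v)) 0 : Fin (t+3) → K) = c • (Fin.snoc (pad t v) 0 : Fin (t+3) → K)
    funext i
    refine Fin.lastCases ?_ (fun i' => ?_) i
    · rw [Fin.snoc_last, Pi.smul_apply, Fin.snoc_last, smul_eq_mul, mul_zero]
    · rw [Fin.snoc_castSucc, Pi.smul_apply, Fin.snoc_castSucc, ih, Pi.smul_apply]

lemma spec_pad (π : Specialisation K L) (t : ℕ) (v : Fin 2 → K) (hv : v ≠ 0) :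
    ∃ (y : Fin 2 → K) (hy : y ≠ 0),
      π.toFun 1 (Projectivization.mk K v hv) = Projectivization.mk K y hy ∧
      π.toFun (t+1) (Projectivization.mk K (pad t v) (pad_ne_zero hv t))
        = Projectivization.mk K (pad t y) (pad_ne_zero hy t) := by
  induction t with
  | zero =>
    obtain ⟨y, hy, _, h⟩ := π.mem_L 1 (Projectivization.mk K v hv)
    exact ⟨y, hy, h, h⟩
  | succ t ih =>
    obtain ⟨y, hy, h1, h2⟩ := ih
    obtain ⟨y', hy', hc1, hc2⟩ := π.compat (t+1) (pad t v) (pad_ne_zero hv t)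
    have hyy : Projectivization.mk K y' hy' = Projectivization.mk K (pad t y) (pad_ne_zero hy t) :=
      hc1.symm.trans h2
    obtain ⟨u, hu⟩ := (Projectivization.mk_eq_mk_iff K _ _ hy' (pad_ne_zero hy t)).1 hyy
    refine ⟨y, hy, h1, ?_⟩
    have hsnoc : (Fin.snoc y' 0 : Fin (t+3) → K) = (u : K) • pad (t+1) y := by
      show (Fin.snoc y' 0 : Fin (t+3) → K) = (u : K) • (Fin.snoc (pad t y) 0 : Fin (t+3) → K)
      funext i
      refine Fin.lastCases ?_ (fun i' => ?_) i
      · rw [Fin.snoc_last, Pi.smul_apply, Fin.snoc_last, smul_eq_mul, mul_zero]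
      · rw [Fin.snoc_castSucc, Pi.smul_apply, Fin.snoc_castSucc, ← hu]
        rfl
    have : π.toFun (t+2) (Projectivization.mk K (Fin.snoc (pad t v) 0)
        (snoc_ne_zero (pad_ne_zero hv t))) = Projectivization.mk K (Fin.snoc y' 0)
        (snoc_ne_zero hy') := hc2
    rw [show Projectivization.mk K (pad (t+1) v) (pad_ne_zero hv (t+1))
        = Projectivization.mk K (Fin.snoc (pad t v) 0) (snoc_ne_zero (pad_ne_zero hv t)) from rfl,
      this, mk_congr (snoc_ne_zero hy') hsnoc]
    exact mk_smul _ (pad_ne_zero hy (t+1)) (Units.ne_zero u)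

lemma pn0_eq (p q : Pn K 0) : p = q := by
  induction p using Projectivization.ind with | h x hx =>
  induction q using Projectivization.ind with | h y hy =>
  have hx0 : x 0 ≠ 0 := by
    intro h
    exact hx (funext fun i => by rw [Fin.fin_one_eq_zero i]; exact h)
  have hy0 : y 0 ≠ 0 := by
    intro h
    exact hy (funext fun i => by rw [Fin.fin_one_eq_zero i]; exact h)
  rw [Projectivization.mk_eq_mk_iff]
  refine ⟨Units.mk0 (x 0 * (y 0)⁻¹) (mul_ne_zero hx0 (inv_ne_zero hy0)), ?_⟩
  funext i
  rw [Fin.fin_one_eq_zero i]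
  show x 0 * (y 0)⁻¹ * y 0 = x 0
  field_simp

set_option maxHeartbeats 1000000 in
lemma spec_eq_specAt (π : Specialisation K L) (t : ℕ) (p : Pn K (t+1)) :
    specAt (toKrull π) p = π.toFun (t+1) p := by
  classical
  induction p using Projectivization.ind with | h v hv =>
  obtain ⟨j, hj⟩ := exists_good (V := toKrull π) hv
  rw [specAt_mk v hv hj]
  set W := toKrull π with hW
  set r : Fin (t+2) → K := vec W v j with hr
  set s : Fin (t+2) → K := fun i => v i * (v j)⁻¹ with hs
  have hsO : ∀ i, s i ∈ W.O := fun i => hj.2 i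
  have hrdef : ∀ i, r i = W.resv (s i) := fun i => rfl
  have hvne2 : ∀ i : Fin (t+2), (![s i, 1] : Fin 2 → K) ≠ 0 :=
    fun i => fin2_ne_zero (Or.inr (by simp))
  have hrne2 : ∀ i : Fin (t+2), (![r i, 1] : Fin 2 → K) ≠ 0 :=
    fun i => fin2_ne_zero (Or.inr (by simp))
  have hpadpt : ∀ i : Fin (t+2), π.toFun (t+1)
      (Projectivization.mk K (pad t ![s i, 1]) (pad_ne_zero (hvne2 i) t))
      = Projectivization.mk K (pad t ![r i, 1]) (pad_ne_zero (hrne2 i) t) := by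
    intro i
    obtain ⟨y, hy, h1, h2⟩ := spec_pad π t ![s i, 1] (hvne2 i)
    have h1' : Projectivization.mk K y hy
        = Projectivization.mk K ![r i, 1] (hrne2 i) := by
      rw [← h1]
      have e : Projectivization.mk K ![s i, 1] (hvne2 i) = ptK (s i) := rfl
      rw [e, spec_resv π (hsO i)]
      rfl
    obtain ⟨u, hu⟩ := (Projectivization.mk_eq_mk_iff K _ _ hy (hrne2 i)).1 h1'
    have hpady : pad t y = (u : K) • pad t ![r i, 1] := by
      rw [← pad_smul]
      congr 1
      rw [← hu]
      rfl
    rw [h2, mk_congr (pad_ne_zero hy t) hpady]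
    exact mk_smul _ (pad_ne_zero (hrne2 i) t) (Units.ne_zero u)
  set P : Fin (t+2) → MvPolynomial (Fin (t+3) × Fin (t+2)) K :=
    fun i => X (i.succ, 1) * X (0, i) - X (i.succ, 0) * X (0, j) with hP
  set S : Set (MvPolynomial (Fin (t+3) × Fin (t+2)) K) := Set.range P with hSdef
  have hDef : DefinedOverN L S := by
    rintro p ⟨i, rfl⟩
    constructor
    · intro mon
      have hmapP : P i = MvPolynomial.map (Int.castRingHom K)
          (X (i.succ, 1) * X (0, i) - X (i.succ, 0) * X (0, j) :
            MvPolynomial (Fin (t+3) × Fin (t+2)) ℤ) := by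
        simp [hP, MvPolynomial.map_X]
      rw [hmapP]; exact coeff_int_mem _ _
    · refine ⟨(Pi.single i.succ 1 + Pi.single 0 1 : Fin (t+3) → ℕ), ?_⟩
      rw [hP]
      exact iwh_sub ((MvPolynomial.isWeightedHomogeneous_X _ _ _).mul
          (MvPolynomial.isWeightedHomogeneous_X _ _ _))
        ((MvPolynomial.isWeightedHomogeneous_X _ _ _).mul
          (MvPolynomial.isWeightedHomogeneous_X _ _ _))
  set xx : Fin (t+3) → Fin (t+2) → K :=
    Fin.cons v (fun i => pad t ![s i, 1]) with hxx
  have hxxne : ∀ k, xx k ≠ 0 := by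
    intro k
    refine Fin.cases ?_ (fun i => ?_) k
    · rw [hxx, Fin.cons_zero]; exact hv
    · rw [hxx, Fin.cons_succ]; exact pad_ne_zero (hvne2 i) t
  have hvanish : VanishesN S (fun k => Projectivization.mk K (xx k) (hxxne k)) := by
    refine ⟨xx, fun k => ⟨hxxne k, rfl⟩, ?_⟩
    rintro p ⟨i, rfl⟩
    rw [hP]
    simp only [map_sub, map_mul, MvPolynomial.eval_X]
    have e1 : xx i.succ = pad t ![s i, 1] := by rw [hxx]; exact Fin.cons_succ _ _ _
    have e0 : xx 0 = v := by rw [hxx]; exact Fin.cons_zero _ _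
    rw [e1, e0, pad_one_app, pad_zero_app]
    show (1 : K) * v i - s i * v j = 0
    rw [hs]
    show (1 : K) * v i - v i * (v j)⁻¹ * v j = 0
    rw [one_mul, mul_assoc, inv_mul_cancel₀ hj.1, mul_one, sub_self]
  obtain ⟨z, hz1, hz2⟩ := π.preserves (t+1) (t+3) S hDef _ hvanish
  choose hzne hzmk using hz1
  have hz0 : Projectivization.mk K (z 0) (hzne 0)
      = π.toFun (t+1) (Projectivization.mk K v hv) := by
    have h := hzmk 0
    have ha : Projectivization.mk K (xx 0) (hxxne 0) = Projectivization.mk K v hv :=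
      mk_congr (hxxne 0) (by rw [hxx]; exact Fin.cons_zero _ _)
    rw [show (π.toFun (t+1) ∘ fun k => Projectivization.mk K (xx k) (hxxne k)) 0
        = π.toFun (t+1) (Projectivization.mk K (xx 0) (hxxne 0)) from rfl, ha] at h
    exact h
  have hzi : ∀ i : Fin (t+2), ∃ c : K, c ≠ 0 ∧ z i.succ = c • pad t ![r i, 1] := by
    intro i
    have h := hzmk i.succ
    have ha : Projectivization.mk K (xx i.succ) (hxxne i.succ)
        = Projectivization.mk K (pad t ![s i, 1]) (pad_ne_zero (hvne2 i) t) :=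
      mk_congr (hxxne i.succ) (by rw [hxx]; exact Fin.cons_succ _ _ _)
    rw [show (π.toFun (t+1) ∘ fun k => Projectivization.mk K (xx k) (hxxne k)) i.succ
        = π.toFun (t+1) (Projectivization.mk K (xx i.succ) (hxxne i.succ)) from rfl,
      ha, hpadpt i] at h
    obtain ⟨u, hu⟩ := (Projectivization.mk_eq_mk_iff K _ _ (hzne i.succ)
      (pad_ne_zero (hrne2 i) t)).1 h
    exact ⟨(u : K), Units.ne_zero u, by rw [← hu]; rfl⟩
  choose c hc0 hcz using hzi
  have heq : ∀ i : Fin (t+2), z 0 i = r i * z 0 j := by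
    intro i
    have h := hz2 (P i) ⟨i, rfl⟩
    rw [hP] at h
    simp only [map_sub, map_mul, MvPolynomial.eval_X] at h
    have e1 : z i.succ 1 = c i := by
      rw [hcz i, Pi.smul_apply, smul_eq_mul, pad_one_app]
      show c i * (1 : K) = c i
      rw [mul_one]
    have e0 : z i.succ 0 = c i * r i := by
      rw [hcz i, Pi.smul_apply, smul_eq_mul, pad_zero_app]
      rfl
    rw [e1, e0] at h
    have h4 : z 0 i - r i * z 0 j = 0 := by
      rcases mul_eq_zero.1 (show c i * (z 0 i - r i * z 0 j) = 0 by linear_combination h)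
        with hh | hh
      · exact absurd hh (hc0 i)
      · exact hh
    linear_combination h4
  have hz0j : z 0 j ≠ 0 := by
    intro h0
    apply hzne 0
    funext i
    rw [heq i, h0, mul_zero]
    rfl
  have hzr : z 0 = z 0 j • r := by
    funext i
    rw [Pi.smul_apply, smul_eq_mul, heq i, mul_comm]
  rw [← hz0, mk_congr (hzne 0) hzr]
  exact (mk_smul r (vec_ne_zero hj) hz0j).symm

lemma krullData_ext {V W : KrullData K L} (h : V.O = W.O) : V = W := by
  cases V; cases W
  cases h
  rfl

lemma spec_ext {π ρ : Specialisation K L} (h : π.toFun = ρ.toFun) : π = ρ := by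
  cases π; cases ρ
  cases h
  rfl

end KS

/-- There is a bijection between (equivalence classes of) Krull valuations on `K` with residue
field `L` and specialisations `π : P(K) → P(L)`: the valuation attached to a specialisation
`π` has valuation ring `O_K = {x : π₁([x:1]) ≠ [1:0]}`, and conversely. -/
theorem krull_equiv_specialisation {K : Type*} [Field K] (L : Subfield K) :
    ∃ e : KrullData K L ≃ Specialisation K L,
      (∀ (V : KrullData K L) (x : K), x ∈ V.O ↔ (e V).toFun 1 (ptK x) ≠ inftyPtK K) ∧
      (∀ (π : Specialisation K L) (x : K),
        x ∈ (e.symm π).O ↔ π.toFun 1 (ptK x) ≠ inftyPtK K) := by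
  refine ⟨⟨KS.toSpec, KS.toKrull, ?_, ?_⟩, ?_, ?_⟩
  · intro V
    apply KS.krullData_ext
    ext x
    rw [show (KS.toKrull (KS.toSpec V)).O = KS.toO (KS.toSpec V) from rfl, KS.mem_toO_iff]
    exact (KS.mem_O_iff_toSpec V x).symm
  · intro π
    apply KS.spec_ext
    funext n p
    cases n with
    | zero => exact KS.pn0_eq _ _
    | succ t => exact KS.spec_eq_specAt π t p
  · intro V x
    exact KS.mem_O_iff_toSpec V x
  · intro π x
    exact Iff.rfl
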